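/- If f : [N] → Z has some value z ∈ Z attained at least k times (k ≥ 2), and S is a uniformly random subset of [N] of size min(N, ⌈10N/k⌉), then with probability at least 9/10, S contains at least two preimages of z. -/

import Mathlib

lemma vander_two (K n m : ℕ) (hm : 3 ≤ m) :
    K.choose 2 * n.choose (m-2) + K.choose 3 * n.choose (m-3) ≤ (K + n).choose m := by
  rw [Nat.add_choose_eq]
  have hsub : ({(2, m-2), (3, m-3)} : Finset (ℕ × ℕ)) ⊆ Finset.HasAntidiagonal.antidiagonal m := by
    intro x hx
    simp only [Finset.mem_insert, Finset.mem_singleton] at hx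
    rcases hx with rfl | rfl <;> simp [Finset.HasAntidiagonal.mem_antidiagonal] <;> omega
  have hne : ((2 : ℕ), m-2) ≠ (3, m-3) := by
    intro h; exact absurd (congrArg Prod.fst h) (by norm_num)
  calc K.choose 2 * n.choose (m-2) + K.choose 3 * n.choose (m-3)
      = ∑ ij ∈ ({(2, m-2), (3, m-3)} : Finset (ℕ × ℕ)), K.choose ij.1 * n.choose ij.2 := by
        rw [Finset.sum_insert (by simp [hne]), Finset.sum_singleton]
    _ ≤ ∑ ij ∈ Finset.HasAntidiagonal.antidiagonal m, K.choose ij.1 * n.choose ij.2 :=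
        Finset.sum_le_sum_of_subset hsub


lemma hq2 (K m a : ℕ) (hK : 11 ≤ K) (hm : 10 ≤ m)
    (h10 : 10 * (K + m + a) ≤ K * m + 10) : 10 * (a+1) ≤ (K-1) * (m-1) := by
  obtain ⟨B, rfl⟩ : ∃ B, K = B + 11 := ⟨K - 11, by omega⟩
  obtain ⟨C, rfl⟩ : ∃ C, m = C + 10 := ⟨m - 10, by omega⟩
  have e1 : B + 11 - 1 = B + 10 := by omega
  have e2 : C + 10 - 1 = C + 9 := by omega
  rw [e1, e2]; nlinarith

lemma hq3 (K m a : ℕ) (hK : 11 ≤ K) (hm : 10 ≤ m)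
    (h10 : 10 * (K + m + a) ≤ K * m + 10) : 10 * (a+2) ≤ (K-2) * (m-2) := by
  obtain ⟨B, rfl⟩ : ∃ B, K = B + 11 := ⟨K - 11, by omega⟩
  obtain ⟨C, rfl⟩ : ∃ C, m = C + 10 := ⟨m - 10, by omega⟩
  have e1 : B + 11 - 2 = B + 9 := by omega
  have e2 : C + 10 - 2 = C + 8 := by omega
  rw [e1, e2]; nlinarith

lemma key2 (K m a : ℕ) (hK : 11 ≤ K) (hm : 10 ≤ m)
    (h10 : 10 * (K + m + a) ≤ K * m + 10) :
    10 * ((m-1+a).choose m + K * (m-1+a).choose (m-1)) ≤ (K + (m-1+a)).choose m := by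
  set n := m - 1 + a with hn
  set T0 := n.choose m with hT0
  set T1 := n.choose (m-1) with hT1
  set T2 := n.choose (m-2) with hT2
  set T3 := n.choose (m-3) with hT3
  -- identities
  have idT1 : T0 * m = T1 * a := by
    have := Nat.choose_succ_right_eq n (m-1)
    rw [show m - 1 + 1 = m by omega] at this
    rw [hT0, hT1, this, show n - (m-1) = a by omega]
  have idT2 : T1 * (m-1) = T2 * (a+1) := by
    have := Nat.choose_succ_right_eq n (m-2)
    rw [show m - 2 + 1 = m - 1 by omega] at this
    rw [hT1, hT2, this, show n - (m-2) = a + 1 by omega]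
  have idT3 : T2 * (m-2) = T3 * (a+2) := by
    have := Nat.choose_succ_right_eq n (m-3)
    rw [show m - 3 + 1 = m - 2 by omega] at this
    rw [hT2, hT3, this, show n - (m-3) = a + 2 by omega]
  have idK2 : K.choose 2 * 2 = K * (K-1) := by
    have := Nat.choose_succ_right_eq K 1
    rwa [Nat.choose_one_right] at this
  have idK3 : K.choose 3 * 3 = K.choose 2 * (K-2) := Nat.choose_succ_right_eq K 2
  -- h1
  have h1 : 10 * T0 ≤ K * T1 := by
    rcases Nat.eq_zero_or_pos a with rfl | ha
    · have : T0 = 0 := by rw [hT0]; exact Nat.choose_eq_zero_of_lt (by omega)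
      simp [this]
    · have hKa : 10 * a ≤ K * m := by nlinarith
      have : (10 * T0) * a ≤ (K * T1) * a := by
        calc (10 * T0) * a ≤ T0 * (K * m) := by nlinarith
          _ = K * (T0 * m) := by ring
          _ = K * (T1 * a) := by rw [idT1]
          _ = (K * T1) * a := by ring
      exact Nat.le_of_mul_le_mul_right this ha
  -- h2
  have h2 : 10 * T1 ≤ (K-1) * T2 := by
    have hq : 10 * (a+1) ≤ (K-1) * (m-1) := hq2 K m a hK hm h10
    have : (10 * T1) * (a+1) ≤ ((K-1) * T2) * (a+1) := by
      calc (10 * T1) * (a+1) ≤ T1 * ((K-1) * (m-1)) := by nlinarith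
        _ = (K-1) * (T1 * (m-1)) := by ring
        _ = (K-1) * (T2 * (a+1)) := by rw [idT2]
        _ = ((K-1) * T2) * (a+1) := by ring
    exact Nat.le_of_mul_le_mul_right this (by omega)
  -- h3
  have h3 : 10 * T2 ≤ (K-2) * T3 := by
    have hq : 10 * (a+2) ≤ (K-2) * (m-2) := hq3 K m a hK hm h10
    have : (10 * T2) * (a+2) ≤ ((K-2) * T3) * (a+2) := by
      calc (10 * T2) * (a+2) ≤ T2 * ((K-2) * (m-2)) := by nlinarith
        _ = (K-2) * (T2 * (m-2)) := by ring
        _ = (K-2) * (T3 * (a+2)) := by rw [idT3]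
        _ = ((K-2) * T3) * (a+2) := by ring
    exact Nat.le_of_mul_le_mul_right this (by omega)
  -- combine
  have g2 : 10 * (K * T1) ≤ 2 * (K.choose 2 * T2) := by
    calc 10 * (K * T1) = K * (10 * T1) := by ring
      _ ≤ K * ((K-1) * T2) := Nat.mul_le_mul_left K h2
      _ = (K * (K-1)) * T2 := by ring
      _ = (K.choose 2 * 2) * T2 := by rw [idK2]
      _ = 2 * (K.choose 2 * T2) := by ring
  have g3 : 10 * (K.choose 2 * T2) ≤ 3 * (K.choose 3 * T3) := by
    calc 10 * (K.choose 2 * T2) = K.choose 2 * (10 * T2) := by ring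
      _ ≤ K.choose 2 * ((K-2) * T3) := Nat.mul_le_mul_left _ h3
      _ = (K.choose 2 * (K-2)) * T3 := by ring
      _ = (K.choose 3 * 3) * T3 := by rw [idK3]
      _ = 3 * (K.choose 3 * T3) := by ring
  have hv := vander_two K n m (by omega)
  rw [← hT2, ← hT3] at hv
  -- set abbreviations as atoms
  set G1 := K * T1
  set G2 := K.choose 2 * T2
  set G3 := K.choose 3 * T3
  omega

theorem stmt_16 {Z : Type*} [DecidableEq Z] (N k : ℕ) (hk : 2 ≤ k)
    (f : ℕ → Z) (z : Z)
    (hpre : k ≤ ((Finset.Icc 1 N).filter (fun x => f x = z)).card) :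
    (9 / 10 : ℚ) ≤
      ((((Finset.Icc 1 N).powersetCard (min N ((10 * N + k - 1) / k))).filter
          (fun S => 2 ≤ (S.filter (fun x => f x = z)).card)).card : ℚ) /
        (((Finset.Icc 1 N).powersetCard (min N ((10 * N + k - 1) / k))).card : ℚ) := by
  classical
  set P := Finset.Icc 1 N with hP
  set A := P.filter (fun x => f x = z) with hA
  set K := A.card with hK
  set c := (10 * N + k - 1) / k with hc
  set m := min N c with hm
  set T := P.powersetCard m with hT
  have hPcard : P.card = N := by rw [hP, Nat.card_Icc]; omega
  have hTcard : T.card = N.choose m := by rw [hT, Finset.card_powersetCard, hPcard]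
  have hKN : K ≤ N := by rw [hK, hA, ← hPcard]; exact Finset.card_filter_le P _
  have hkK : k ≤ K := hpre
  have hN1 : 1 ≤ N := by omega
  have hmN : m ≤ N := min_le_left _ _
  have hbad : 10 * (T.filter (fun S => ¬ 2 ≤ (S.filter (fun x => f x = z)).card)).card
      ≤ T.card := by
    rcases eq_or_lt_of_le hmN with heq | hlt
    · -- m = N, the only subset is P itself and it is good
      have hempty : T.filter (fun S => ¬ 2 ≤ (S.filter (fun x => f x = z)).card) = ∅ := by
        rw [Finset.filter_eq_empty_iff]
        intro S hS
        rw [hT, Finset.mem_powersetCard] at hS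
        have hSP : S = P := Finset.eq_of_subset_of_card_le hS.1 (by omega)
        rw [hSP]
        simp only [not_not]
        exact le_trans hk hpre
      rw [hempty]; simp
    · -- m < N
      have hmc : m = c := by omega
      have hkm : 10 * N ≤ k * m := by
        rw [hmc, hc]
        have h2 : (10 * N + k - 1) % k < k := Nat.mod_lt _ (by omega)
        have key := Nat.div_add_mod (10 * N + k - 1) k
        omega
      have hKm : 10 * N ≤ K * m := le_trans hkm (Nat.mul_le_mul_right m hkK)
      have hNm : K * m ≤ N * m := Nat.mul_le_mul_right m hKN
      have hm1 : 1 ≤ m := by nlinarith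
      have hK11 : 11 ≤ K := by nlinarith
      have hm10 : 10 ≤ m := by nlinarith
      -- counting bound for bad sets
      have hcount : (T.filter (fun S => ¬ 2 ≤ (S.filter (fun x => f x = z)).card)).card
          ≤ (N - K).choose m + K * (N - K).choose (m - 1) := by
        have hsplit2 : T.filter (fun S => ¬ 2 ≤ (S.filter (fun x => f x = z)).card)
            = T.filter (fun S => (S.filter (fun x => f x = z)).card = 0)
              ∪ T.filter (fun S => (S.filter (fun x => f x = z)).card = 1) := by
          ext S
          simp only [Finset.mem_filter, Finset.mem_union]
          constructor
          · rintro ⟨h1, h2⟩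
            rcases (by omega : (S.filter (fun x => f x = z)).card = 0 ∨ (S.filter (fun x => f x = z)).card = 1) with h | h
            · exact Or.inl ⟨h1, h⟩
            · exact Or.inr ⟨h1, h⟩
          · rintro (⟨h1, h2⟩ | ⟨h1, h2⟩) <;> exact ⟨h1, by omega⟩
        rw [hsplit2]
        refine le_trans (Finset.card_union_le _ _) ?_
        have b0 : (T.filter (fun S => (S.filter (fun x => f x = z)).card = 0)).card
            ≤ (N - K).choose m := by
          have hsub : T.filter (fun S => (S.filter (fun x => f x = z)).card = 0)
              ⊆ (P \ A).powersetCard m := by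
            intro S hS
            rw [Finset.mem_filter] at hS
            obtain ⟨hS1, hS2⟩ := hS
            rw [hT, Finset.mem_powersetCard] at hS1
            rw [Finset.mem_powersetCard]
            refine ⟨?_, hS1.2⟩
            intro x hx
            rw [Finset.mem_sdiff]
            refine ⟨hS1.1 hx, ?_⟩
            intro hxA
            rw [hA, Finset.mem_filter] at hxA
            have hmem : x ∈ S.filter (fun x => f x = z) := Finset.mem_filter.mpr ⟨hx, hxA.2⟩
            have hemp : S.filter (fun x => f x = z) = ∅ := Finset.card_eq_zero.mp hS2
            rw [hemp] at hmem
            exact absurd hmem (Finset.notMem_empty x)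
          refine le_trans (Finset.card_le_card hsub) ?_
          rw [Finset.card_powersetCard, Finset.card_sdiff_of_subset (Finset.filter_subset _ _)]
          rw [hPcard]
        have b1 : (T.filter (fun S => (S.filter (fun x => f x = z)).card = 1)).card
            ≤ K * (N - K).choose (m - 1) := by
          have hmap : ∀ S ∈ T.filter (fun S => (S.filter (fun x => f x = z)).card = 1),
              (S.filter (fun x => f x = z), S.filter (fun x => ¬ f x = z))
                ∈ (A.powersetCard 1) ×ˢ ((P \ A).powersetCard (m - 1)) := by
            intro S hS
            rw [Finset.mem_filter] at hS
            obtain ⟨hS1, hS2⟩ := hS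
            rw [hT, Finset.mem_powersetCard] at hS1
            rw [Finset.mem_product]
            dsimp only
            constructor
            · rw [Finset.mem_powersetCard]
              refine ⟨?_, hS2⟩
              intro x hx
              rw [Finset.mem_filter] at hx
              exact Finset.mem_filter.mpr ⟨hS1.1 hx.1, hx.2⟩
            · rw [Finset.mem_powersetCard]
              constructor
              · intro x hx
                rw [Finset.mem_filter] at hx
                rw [Finset.mem_sdiff]
                refine ⟨hS1.1 hx.1, ?_⟩
                intro hxA
                exact hx.2 (Finset.mem_filter.mp hxA).2
              · have h3 := Finset.card_filter_add_card_filter_not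
                  (s := S) (p := fun x => f x = z)
                beta_reduce at h3
                have hSm : S.card = m := hS1.2
                omega
          refine le_trans (Finset.card_le_card_of_injOn _ hmap ?_) ?_
          · intro S1 _ S2 _ h
            have h1 := congrArg Prod.fst h
            have h2 := congrArg Prod.snd h
            simp only at h1 h2
            have e1 : S1 = S1.filter (fun x => f x = z) ∪ S1.filter (fun x => ¬ f x = z) :=
              (Finset.filter_union_filter_not_eq (p := fun x => f x = z) S1).symm
            have e2 : S2 = S2.filter (fun x => f x = z) ∪ S2.filter (fun x => ¬ f x = z) :=
              (Finset.filter_union_filter_not_eq (p := fun x => f x = z) S2).symm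
            rw [e1, e2, h1, h2]
          rw [Finset.card_product, Finset.card_powersetCard, Finset.card_powersetCard,
            Finset.card_sdiff_of_subset (Finset.filter_subset _ _), hPcard, Nat.choose_one_right]
        omega
      rw [hTcard]
      refine le_trans (Nat.mul_le_mul_left 10 hcount) ?_
      rcases le_or_gt (m - 1) (N - K) with hcase | hcase
      · -- main case: use key2
        have ha : m - 1 + (N - K - (m - 1)) = N - K := by omega
        have hb : K + (N - K) = N := by omega
        have h10' : 10 * (K + m + (N - K - (m - 1))) ≤ K * m + 10 := by omega
        have := key2 K m (N - K - (m - 1)) hK11 hm10 h10'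
        rw [ha, hb] at this
        exact this
      · -- degenerate: binomials vanish
        have z1 : (N - K).choose m = 0 := Nat.choose_eq_zero_of_lt (by omega)
        have z2 : (N - K).choose (m - 1) = 0 := Nat.choose_eq_zero_of_lt (by omega)
        rw [z1, z2]
        simp
  -- final arithmetic
  have hTpos : 0 < T.card := by
    rw [hTcard]; exact Nat.choose_pos hmN
  have hsplit := Finset.card_filter_add_card_filter_not
    (s := T) (p := fun S => 2 ≤ (S.filter (fun x => f x = z)).card)
  beta_reduce at hsplit
  have hnat : 9 * T.card ≤ (T.filter (fun S => 2 ≤ (S.filter (fun x => f x = z)).card)).card * 10 := by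
    omega
  rw [div_le_div_iff₀ (by norm_num) (by exact_mod_cast hTpos)]
  exact_mod_cast hnat
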